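/- arXiv:2007.13811 — 6 statements merged into one kernel-verified Lean document; each statement's English description precedes it below -/
import Mathlib

section
/- The characteristic polynomial of the Jacobian of the SEIHRD system at an equilibrium (I = E = H = 0) factors as ε³(γ₁+δ₁+ε)((α+ε)(λ₀+γ₀+δ₀+ε) - αβS/N), i.e., the determinant of (J - εId) equals this expression up to sign, where J is the 6×6 Jacobian evaluated at the equilibrium. -/
open Matrix

private lemma v0 (a b c d e f : ℝ) : ![a,b,c,d,e,f] 0 = a := rfl
private lemma v1 (a b c d e f : ℝ) : ![a,b,c,d,e,f] 1 = b := rfl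
private lemma v2 (a b c d e f : ℝ) : ![a,b,c,d,e,f] 2 = c := rfl
private lemma v3 (a b c d e f : ℝ) : ![a,b,c,d,e,f] 3 = d := rfl
private lemma v4 (a b c d e f : ℝ) : ![a,b,c,d,e,f] 4 = e := rfl
private lemma v5 (a b c d e f : ℝ) : ![a,b,c,d,e,f] 5 = f := rfl

set_option maxHeartbeats 4000000 in
set_option maxRecDepth 4000 in
/-- The characteristic polynomial of the SEIHRD Jacobian at an equilibrium
factors as `ε³(γ₁+δ₁+ε)((α+ε)(lam₀+γ₀+δ₀+ε) - αβS/N)`. -/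
theorem seihrd_jacobian_char_poly
    (N β α γ₀ lam₀ δ₀ γ₁ δ₁ S ε : ℝ) (hN : 0 < N)
    (hβ : 0 < β) (hα : 0 < α) (hγ₀ : 0 < γ₀) (hlam₀ : 0 < lam₀) (hδ₀ : 0 < δ₀)
    (hγ₁ : 0 < γ₁) (hδ₁ : 0 < δ₁)
    (J : Matrix (Fin 6) (Fin 6) ℝ)
    (hJ : J = !![0, 0, -β * S / N, 0, 0, 0;
                 0, -α, β * S / N, 0, 0, 0;
                 0, α, -(lam₀ + γ₀ + δ₀), 0, 0, 0;
                 0, 0, lam₀, -γ₁ - δ₁, 0, 0;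
                 0, 0, γ₀, γ₁, 0, 0;
                 0, 0, δ₀, δ₁, 0, 0]) :
    (J - ε • (1 : Matrix (Fin 6) (Fin 6) ℝ)).det
      = ε ^ 3 * (γ₁ + δ₁ + ε) * ((α + ε) * (lam₀ + γ₀ + δ₀ + ε) - α * β * S / N) := by
  have h : J - ε • (1 : Matrix (Fin 6) (Fin 6) ℝ) =
    !![-ε, 0, -β * S / N, 0, 0, 0;
       0, -α - ε, β * S / N, 0, 0, 0;
       0, α, -(lam₀ + γ₀ + δ₀) - ε, 0, 0, 0;
       0, 0, lam₀, -γ₁ - δ₁ - ε, 0, 0;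
       0, 0, γ₀, γ₁, -ε, 0;
       0, 0, δ₀, δ₁, 0, -ε] := by
    subst hJ
    ext i j
    fin_cases i <;> fin_cases j <;>
      (try simp [Matrix.one_apply, Matrix.sub_apply, Matrix.smul_apply, v0, v1, v2, v3, v4, v5]) <;> rfl
  rw [h]
  simp [Matrix.det_succ_row_zero, Fin.sum_univ_succ, Fin.succAbove,
    v0, v1, v2, v3, v4, v5]
  ring
end

section
/- In the SEIHRD system with nonnegative initial conditions, all state variables S, E, I, H, R, D remain nonnegative for all t ≥ 0. -/
open Set Filter Topology

lemma seihrd_aux_mul (x y b p : ℝ) (hb : 0 ≤ b) (hp : 0 ≤ p)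
    (hx : -p ≤ x) (hxb : x ≤ b) (hy : -p ≤ y) (hyb : y ≤ b) : -(b * p) ≤ x * y := by
  rcases le_or_gt 0 x with h | h
  · nlinarith
  · nlinarith

lemma seihrd_aux_ev {ψ : ℝ → ℝ} {τ d : ℝ} (hψ : HasDerivAt ψ d τ)
    (h0 : 0 ≤ ψ τ) (hd : ψ τ = 0 → 0 < d) :
    ∀ᶠ u in 𝓝[>] τ, 0 ≤ ψ u := by
  rcases eq_or_lt_of_le h0 with he | hpos
  · have hd' := hd he.symm
    have hslope := hasDerivAt_iff_tendsto_slope.mp hψ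
    have h1 : ∀ᶠ u in 𝓝[≠] τ, 0 < slope ψ τ u := hslope (Ioi_mem_nhds hd')
    have hle : (𝓝[>] τ : Filter ℝ) ≤ 𝓝[≠] τ :=
      nhdsWithin_mono τ (fun u hu => ne_of_gt hu)
    filter_upwards [h1.filter_mono hle, self_mem_nhdsWithin] with u hu hu'
    rw [slope_def_field] at hu
    have hden : 0 < u - τ := sub_pos.mpr hu'
    rcases div_pos_iff.mp hu with ⟨hnum, _⟩ | ⟨_, hneg⟩
    · linarith
    · linarith
  · have hc : Filter.Tendsto ψ (𝓝 τ) (𝓝 (ψ τ)) := hψ.continuousAt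
    have h1 : ∀ᶠ u in 𝓝 τ, 0 < ψ u := hc (Ioi_mem_nhds hpos)
    exact (h1.filter_mono nhdsWithin_le_nhds).mono fun u hu => hu.le

lemma seihrd_aux_limit {ψ : ℝ → ℝ} {τ : ℝ} (hτ : 0 < τ) (hc : ContinuousAt ψ τ)
    (h : ∀ u ∈ Set.Ico 0 τ, 0 ≤ ψ u) : 0 ≤ ψ τ := by
  have ht : Filter.Tendsto ψ (𝓝[<] τ) (𝓝 (ψ τ)) := hc.mono_left nhdsWithin_le_nhds
  refine ge_of_tendsto ht ?_
  have hmem : Set.Ioo 0 τ ∈ 𝓝[<] τ := Ioo_mem_nhdsLT_of_mem ⟨hτ, le_refl τ⟩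
  filter_upwards [hmem] with u hu
  exact h u ⟨hu.1.le, hu.2⟩

lemma seihrd_aux_eps {x c : ℝ} (hc : 0 < c) (h : ∀ ε > 0, 0 ≤ x + ε * c) : 0 ≤ x := by
  by_contra hx
  push_neg at hx
  have hε : 0 < -x / (2 * c) := div_pos (by linarith) (by linarith)
  have h2 := h _ hε
  have hc' : (2 * c) ≠ 0 := by positivity
  have he : -x / (2 * c) * c = -x / 2 := by field_simp
  rw [he] at h2
  linarith

set_option maxHeartbeats 1000000 in
/-- Nonnegativity of all SEIHRD state variables. -/
theorem seihrd_nonneg_invariant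
    (N β α γ₀ lam₀ δ₀ γ₁ δ₁ : ℝ) (hN : 0 < N)
    (hβ : 0 ≤ β) (hα : 0 ≤ α) (hγ₀ : 0 ≤ γ₀) (hlam₀ : 0 ≤ lam₀) (hδ₀ : 0 ≤ δ₀)
    (hγ₁ : 0 ≤ γ₁) (hδ₁ : 0 ≤ δ₁)
    (S E I H R D : ℝ → ℝ)
    (hS : ∀ t ∈ Set.Ici (0 : ℝ), HasDerivAt S (-β * S t * I t / N) t)
    (hE : ∀ t ∈ Set.Ici (0 : ℝ), HasDerivAt E (β * S t * I t / N - α * E t) t)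
    (hI : ∀ t ∈ Set.Ici (0 : ℝ), HasDerivAt I (α * E t - (γ₀ + lam₀ + δ₀) * I t) t)
    (hH : ∀ t ∈ Set.Ici (0 : ℝ), HasDerivAt H (lam₀ * I t - (γ₁ + δ₁) * H t) t)
    (hR : ∀ t ∈ Set.Ici (0 : ℝ), HasDerivAt R (γ₀ * I t + γ₁ * H t) t)
    (hD : ∀ t ∈ Set.Ici (0 : ℝ), HasDerivAt D (δ₀ * I t + δ₁ * H t) t)
    (h0 : 0 ≤ S 0 ∧ 0 ≤ E 0 ∧ 0 ≤ I 0 ∧ 0 ≤ H 0 ∧ 0 ≤ R 0 ∧ 0 ≤ D 0) :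
    ∀ t ∈ Set.Ici (0 : ℝ),
      0 ≤ S t ∧ 0 ≤ E t ∧ 0 ≤ I t ∧ 0 ≤ H t ∧ 0 ≤ R t ∧ 0 ≤ D t := by
  intro t ht
  -- continuity and bounds for S and I on [0, t]
  have hScont : ContinuousOn S (Set.Icc 0 t) := fun s hs => (hS s hs.1).continuousAt.continuousWithinAt
  have hIcont : ContinuousOn I (Set.Icc 0 t) := fun s hs => (hI s hs.1).continuousAt.continuousWithinAt
  obtain ⟨BS, hBS⟩ := isCompact_Icc.exists_bound_of_continuousOn hScont
  obtain ⟨BI, hBI⟩ := isCompact_Icc.exists_bound_of_continuousOn hIcont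
  set B : ℝ := max (max BS BI) 0 with hBdef
  have hB0 : 0 ≤ B := le_max_right _ _
  have hSB : ∀ s ∈ Set.Icc (0:ℝ) t, |S s| ≤ B := by
    intro s hs
    have := hBS s hs
    rw [Real.norm_eq_abs] at this
    exact this.trans (le_trans (le_max_left BS BI) (le_max_left _ _))
  have hIB : ∀ s ∈ Set.Icc (0:ℝ) t, |I s| ≤ B := by
    intro s hs
    have := hBI s hs
    rw [Real.norm_eq_abs] at this
    exact this.trans (le_trans (le_max_right BS BI) (le_max_left _ _))
  set r : ℝ := β / N with hrdef
  have hr : 0 ≤ r := by rw [hrdef]; positivity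
  set K : ℝ := r * B + α + lam₀ + γ₀ + γ₁ + δ₀ + δ₁ + 1 with hKdef
  suffices hmain : ∀ ε > 0, ∀ s ∈ Set.Icc (0:ℝ) t,
      0 ≤ S s + ε * Real.exp (K * s) ∧ 0 ≤ E s + ε * Real.exp (K * s) ∧
      0 ≤ I s + ε * Real.exp (K * s) ∧ 0 ≤ H s + ε * Real.exp (K * s) ∧
      0 ≤ R s + ε * Real.exp (K * s) ∧ 0 ≤ D s + ε * Real.exp (K * s) by
    have hct : 0 < Real.exp (K * t) := Real.exp_pos _
    have htm : t ∈ Set.Icc (0:ℝ) t := ⟨ht, le_refl t⟩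
    exact ⟨seihrd_aux_eps hct (fun ε hε => (hmain ε hε t htm).1),
      seihrd_aux_eps hct (fun ε hε => (hmain ε hε t htm).2.1),
      seihrd_aux_eps hct (fun ε hε => (hmain ε hε t htm).2.2.1),
      seihrd_aux_eps hct (fun ε hε => (hmain ε hε t htm).2.2.2.1),
      seihrd_aux_eps hct (fun ε hε => (hmain ε hε t htm).2.2.2.2.1),
      seihrd_aux_eps hct (fun ε hε => (hmain ε hε t htm).2.2.2.2.2)⟩
  intro ε hε
  set φ : ℝ → ℝ := fun s => ε * Real.exp (K * s) with hφdef
  have hφpos : ∀ s, 0 < φ s := fun s => mul_pos hε (Real.exp_pos _)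
  have hφd : ∀ s, HasDerivAt φ (K * φ s) s := by
    intro s
    have h1 : HasDerivAt (fun x : ℝ => K * x) K s := by
      simpa using (hasDerivAt_id s).const_mul K
    have h3 := h1.exp.const_mul ε
    have e : K * φ s = ε * (Real.exp (K * s) * K) := by
      show K * (ε * Real.exp (K * s)) = _; ring
    rw [e]; exact h3
  have hQ0 : 0 ≤ S 0 + φ 0 ∧ 0 ≤ E 0 + φ 0 ∧ 0 ≤ I 0 + φ 0 ∧ 0 ≤ H 0 + φ 0 ∧
      0 ≤ R 0 + φ 0 ∧ 0 ≤ D 0 + φ 0 := by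
    obtain ⟨a1, a2, a3, a4, a5, a6⟩ := h0
    have := (hφpos 0).le
    exact ⟨by linarith, by linarith, by linarith, by linarith, by linarith, by linarith⟩
  set A : Set ℝ := {s | s ∈ Set.Icc (0:ℝ) t ∧ ∀ u ∈ Set.Icc (0:ℝ) s,
      0 ≤ S u + φ u ∧ 0 ≤ E u + φ u ∧ 0 ≤ I u + φ u ∧ 0 ≤ H u + φ u ∧
      0 ≤ R u + φ u ∧ 0 ≤ D u + φ u} with hAdef
  have h0A : (0:ℝ) ∈ A := by
    refine ⟨⟨le_refl 0, ht⟩, fun u hu => ?_⟩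
    have : u = 0 := le_antisymm hu.2 hu.1
    rwa [this]
  have hbdd : BddAbove A := ⟨t, fun s hs => hs.1.2⟩
  set τ : ℝ := sSup A with hτdef
  have hτ0 : 0 ≤ τ := le_csSup hbdd h0A
  have hτt : τ ≤ t := csSup_le ⟨0, h0A⟩ (fun s hs => hs.1.2)
  have hIco : ∀ u ∈ Set.Ico (0:ℝ) τ,
      0 ≤ S u + φ u ∧ 0 ≤ E u + φ u ∧ 0 ≤ I u + φ u ∧ 0 ≤ H u + φ u ∧
      0 ≤ R u + φ u ∧ 0 ≤ D u + φ u := by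
    intro u hu
    obtain ⟨a, haA, hua⟩ := exists_lt_of_lt_csSup ⟨0, h0A⟩ hu.2
    exact haA.2 u ⟨hu.1, hua.le⟩
  have hτI : τ ∈ Set.Ici (0:ℝ) := hτ0
  have hQτ : 0 ≤ S τ + φ τ ∧ 0 ≤ E τ + φ τ ∧ 0 ≤ I τ + φ τ ∧ 0 ≤ H τ + φ τ ∧
      0 ≤ R τ + φ τ ∧ 0 ≤ D τ + φ τ := by
    rcases eq_or_lt_of_le hτ0 with he | hpos
    · rw [← he]; exact hQ0
    · exact ⟨seihrd_aux_limit (ψ := fun u => S u + φ u) hpos ((hS τ hτI).continuousAt.add (hφd τ).continuousAt)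
          (fun u hu => (hIco u hu).1),
        seihrd_aux_limit (ψ := fun u => E u + φ u) hpos ((hE τ hτI).continuousAt.add (hφd τ).continuousAt)
          (fun u hu => (hIco u hu).2.1),
        seihrd_aux_limit (ψ := fun u => I u + φ u) hpos ((hI τ hτI).continuousAt.add (hφd τ).continuousAt)
          (fun u hu => (hIco u hu).2.2.1),
        seihrd_aux_limit (ψ := fun u => H u + φ u) hpos ((hH τ hτI).continuousAt.add (hφd τ).continuousAt)
          (fun u hu => (hIco u hu).2.2.2.1),
        seihrd_aux_limit (ψ := fun u => R u + φ u) hpos ((hR τ hτI).continuousAt.add (hφd τ).continuousAt)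
          (fun u hu => (hIco u hu).2.2.2.2.1),
        seihrd_aux_limit (ψ := fun u => D u + φ u) hpos ((hD τ hτI).continuousAt.add (hφd τ).continuousAt)
          (fun u hu => (hIco u hu).2.2.2.2.2)⟩
  have hτA : τ ∈ A := by
    refine ⟨⟨hτ0, hτt⟩, fun u hu => ?_⟩
    rcases lt_or_eq_of_le hu.2 with h | h
    · exact hIco u ⟨hu.1, h⟩
    · rw [h]; exact hQτ
  have hτeq : τ = t := by
    by_contra hne
    have hτlt : τ < t := lt_of_le_of_ne hτt hne
    have hτm : τ ∈ Set.Icc (0:ℝ) t := ⟨hτ0, hτt⟩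
    obtain ⟨qS, qE, qI, qH, qR, qD⟩ := hQτ
    have hP : 0 < φ τ := hφpos τ
    have hSlow : -φ τ ≤ S τ := by linarith
    have hElow : -φ τ ≤ E τ := by linarith
    have hIlow : -φ τ ≤ I τ := by linarith
    have hHlow : -φ τ ≤ H τ := by linarith
    have hSb := abs_le.mp (hSB τ hτm)
    have hIb := abs_le.mp (hIB τ hτm)
    have hexp : K * φ τ = r * B * φ τ + α * φ τ + lam₀ * φ τ + γ₀ * φ τ + γ₁ * φ τ +
        δ₀ * φ τ + δ₁ * φ τ + φ τ := by rw [hKdef]; ring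
    have nn1 : 0 ≤ r * B * φ τ := mul_nonneg (mul_nonneg hr hB0) hP.le
    have nn2 : 0 ≤ α * φ τ := mul_nonneg hα hP.le
    have nn3 : 0 ≤ lam₀ * φ τ := mul_nonneg hlam₀ hP.le
    have nn4 : 0 ≤ γ₀ * φ τ := mul_nonneg hγ₀ hP.le
    have nn5 : 0 ≤ γ₁ * φ τ := mul_nonneg hγ₁ hP.le
    have nn6 : 0 ≤ δ₀ * φ τ := mul_nonneg hδ₀ hP.le
    have nn7 : 0 ≤ δ₁ * φ τ := mul_nonneg hδ₁ hP.le
    have eS : ∀ᶠ u in 𝓝[>] τ, 0 ≤ S u + φ u := by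
      refine seihrd_aux_ev ((hS τ hτI).add (hφd τ)) qS (fun h0' => ?_)
      have hSv : S τ = -φ τ := by linarith
      have h1 : -β * S τ * I τ / N = r * (φ τ * I τ) := by rw [hSv, hrdef]; ring
      have h2 : r * (φ τ * (-B)) ≤ r * (φ τ * I τ) :=
        mul_le_mul_of_nonneg_left (mul_le_mul_of_nonneg_left hIb.1 hP.le) hr
      rw [h1]
      linarith [hexp, h2, hP, nn2, nn3, nn4, nn5, nn6, nn7]
    have eE : ∀ᶠ u in 𝓝[>] τ, 0 ≤ E u + φ u := by
      refine seihrd_aux_ev ((hE τ hτI).add (hφd τ)) qE (fun h0' => ?_)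
      have hEv : E τ = -φ τ := by linarith
      have h1 : β * S τ * I τ / N = r * (S τ * I τ) := by rw [hrdef]; ring
      have hmul : -(B * φ τ) ≤ S τ * I τ :=
        seihrd_aux_mul _ _ _ _ hB0 hP.le hSlow hSb.2 hIlow hIb.2
      have h2 : r * (-(B * φ τ)) ≤ r * (S τ * I τ) := mul_le_mul_of_nonneg_left hmul hr
      rw [h1, hEv]
      linarith [hexp, h2, hP, nn3, nn4, nn5, nn6, nn7]
    have eI : ∀ᶠ u in 𝓝[>] τ, 0 ≤ I u + φ u := by
      refine seihrd_aux_ev ((hI τ hτI).add (hφd τ)) qI (fun h0' => ?_)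
      have hIv : I τ = -φ τ := by linarith
      have h2 : α * (-φ τ) ≤ α * E τ := mul_le_mul_of_nonneg_left hElow hα
      rw [hIv]
      linarith [hexp, h2, hP, nn1, nn3, nn4, nn5, nn6, nn7]
    have eH : ∀ᶠ u in 𝓝[>] τ, 0 ≤ H u + φ u := by
      refine seihrd_aux_ev ((hH τ hτI).add (hφd τ)) qH (fun h0' => ?_)
      have hHv : H τ = -φ τ := by linarith
      have h2 : lam₀ * (-φ τ) ≤ lam₀ * I τ := mul_le_mul_of_nonneg_left hIlow hlam₀
      rw [hHv]
      linarith [hexp, h2, hP, nn1, nn2, nn4, nn5, nn6, nn7]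
    have eR : ∀ᶠ u in 𝓝[>] τ, 0 ≤ R u + φ u := by
      refine seihrd_aux_ev ((hR τ hτI).add (hφd τ)) qR (fun h0' => ?_)
      have h2 : γ₀ * (-φ τ) ≤ γ₀ * I τ := mul_le_mul_of_nonneg_left hIlow hγ₀
      have h3 : γ₁ * (-φ τ) ≤ γ₁ * H τ := mul_le_mul_of_nonneg_left hHlow hγ₁
      linarith [hexp, h2, h3, hP, nn1, nn2, nn3, nn6, nn7]
    have eD : ∀ᶠ u in 𝓝[>] τ, 0 ≤ D u + φ u := by
      refine seihrd_aux_ev ((hD τ hτI).add (hφd τ)) qD (fun h0' => ?_)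
      have h2 : δ₀ * (-φ τ) ≤ δ₀ * I τ := mul_le_mul_of_nonneg_left hIlow hδ₀
      have h3 : δ₁ * (-φ τ) ≤ δ₁ * H τ := mul_le_mul_of_nonneg_left hHlow hδ₁
      linarith [hexp, h2, h3, hP, nn1, nn2, nn3, nn4, nn5]
    have hall := eS.and (eE.and (eI.and (eH.and (eR.and eD))))
    obtain ⟨u, hu, hsub⟩ := mem_nhdsGT_iff_exists_Ioc_subset.mp hall
    set u₀ : ℝ := min u t with hu₀def
    have hu₀τ : τ < u₀ := lt_min hu hτlt
    have hu₀A : u₀ ∈ A := by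
      refine ⟨⟨le_trans hτ0 hu₀τ.le, min_le_right _ _⟩, fun v hv => ?_⟩
      rcases le_or_gt v τ with h | h
      · exact hτA.2 v ⟨hv.1, h⟩
      · have hvm : v ∈ Set.Ioc τ u := ⟨h, hv.2.trans (min_le_left _ _)⟩
        obtain ⟨a1, a2, a3, a4, a5, a6⟩ := hsub hvm
        exact ⟨a1, a2, a3, a4, a5, a6⟩
    have := le_csSup hbdd hu₀A
    linarith
  intro s hs
  rw [← hτeq] at hs
  exact hτA.2 s hs
end

section
/- For the SEIR subsystem with constant infection rate β, the quantity V(t) = S(t) - (N/R₀) log S(t) + E(t) + I(t) is nonincreasing along solutions with S, E, I > 0, where R₀ = β/(λ₀+γ₀+δ₀). -/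
open Set

/-- The Lyapunov-type quantity `V = S - (N/R₀) log S + E + I` is nonincreasing
along positive SEIR solutions. -/
theorem seir_lyapunov_nonincreasing
    (N β α lam₀ γ₀ δ₀ : ℝ) (hN : 0 < N)
    (hβ : 0 < β) (hα : 0 < α) (hlam₀ : 0 < lam₀) (hγ₀ : 0 < γ₀) (hδ₀ : 0 < δ₀)
    (S E I : ℝ → ℝ)
    (hpos : ∀ t ∈ Ici (0 : ℝ), 0 < S t ∧ 0 < E t ∧ 0 < I t)
    (hS : ∀ t ∈ Ici (0 : ℝ), HasDerivAt S (-β * S t * I t / N) t)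
    (hE : ∀ t ∈ Ici (0 : ℝ), HasDerivAt E (β * S t * I t / N - α * E t) t)
    (hI : ∀ t ∈ Ici (0 : ℝ),
      HasDerivAt I (α * E t - (lam₀ + γ₀ + δ₀) * I t) t) :
    AntitoneOn
      (fun t => S t - (N / (β / (lam₀ + γ₀ + δ₀))) * Real.log (S t) + E t + I t)
      (Ici (0 : ℝ)) := by
  have hc : 0 < lam₀ + γ₀ + δ₀ := by linarith
  have key : ∀ t ∈ Ici (0:ℝ), HasDerivAt
      (fun t => S t - (N / (β / (lam₀ + γ₀ + δ₀))) * Real.log (S t) + E t + I t) 0 t := by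
    intro t ht
    obtain ⟨hS0, hE0, hI0⟩ := hpos t ht
    have h1 := hS t ht
    have h2 := hE t ht
    have h3 := hI t ht
    have hlog := h1.log hS0.ne'
    have := ((h1.sub (hlog.const_mul (N / (β / (lam₀ + γ₀ + δ₀))))).add h2).add h3
    refine this.congr_deriv ?_
    field_simp
    ring
  apply antitoneOn_of_deriv_nonpos (convex_Ici 0)
  · exact fun t ht => (key t ht).continuousAt.continuousWithinAt
  · intro t ht
    rw [interior_Ici] at ht
    exact (key t (mem_Ici.mpr (le_of_lt (mem_Ioi.mp ht)))).differentiableAt.differentiableWithinAt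
  · intro t ht
    rw [interior_Ici] at ht
    rw [(key t (mem_Ici.mpr (le_of_lt (mem_Ioi.mp ht)))).deriv]
end

section
/- For the SEIR subsystem with constant β, the limit S_∞ = lim_{t→∞} S(t) exists and satisfies S_∞ ≤ N/R₀ whenever E(0) + I(0) > 0 and R₀ > 1, where R₀ = β/(λ₀+γ₀+δ₀). More precisely, if S(t) > N/R₀ for all t in an interval where I stays positive, then S+E+I is strictly decreasing there; the final susceptible fraction cannot exceed N/R₀. -/
open Set Filter Topology

lemma aux_antitoneOn (f f' : ℝ → ℝ)
    (hf : ∀ t ∈ Ici (0:ℝ), HasDerivAt f (f' t) t)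
    (h : ∀ t ∈ Ici (0:ℝ), f' t ≤ 0) : AntitoneOn f (Ici 0) := by
  apply antitoneOn_of_deriv_nonpos (convex_Ici 0)
  · exact fun t ht => (hf t ht).continuousAt.continuousWithinAt
  · rw [interior_Ici]
    exact fun t ht => (hf t (mem_Ici.mpr (le_of_lt ht))).differentiableAt.differentiableWithinAt
  · rw [interior_Ici]
    intro t ht
    rw [(hf t (mem_Ici.mpr (le_of_lt ht))).deriv]
    exact h t (mem_Ici.mpr (le_of_lt ht))

lemma aux_monotoneOn (f f' : ℝ → ℝ)
    (hf : ∀ t ∈ Ici (0:ℝ), HasDerivAt f (f' t) t)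
    (h : ∀ t ∈ Ici (0:ℝ), 0 ≤ f' t) : MonotoneOn f (Ici 0) := by
  apply monotoneOn_of_deriv_nonneg (convex_Ici 0)
  · exact fun t ht => (hf t ht).continuousAt.continuousWithinAt
  · rw [interior_Ici]
    exact fun t ht => (hf t (mem_Ici.mpr (le_of_lt ht))).differentiableAt.differentiableWithinAt
  · rw [interior_Ici]
    intro t ht
    rw [(hf t (mem_Ici.mpr (le_of_lt ht))).deriv]
    exact h t (mem_Ici.mpr (le_of_lt ht))

/-- The limit `S_∞` of the susceptible population exists and satisfies
`S_∞ ≤ N / R₀` for the SEIR subsystem with `R₀ > 1`. -/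
theorem seir_final_size_bound
    (N β α lam₀ γ₀ δ₀ : ℝ) (hN : 0 < N)
    (hβ : 0 < β) (hα : 0 < α) (hlam₀ : 0 < lam₀) (hγ₀ : 0 < γ₀) (hδ₀ : 0 < δ₀)
    (hR₀ : β / (lam₀ + γ₀ + δ₀) > 1)
    (S E I : ℝ → ℝ)
    (hnn : ∀ t ∈ Ici (0 : ℝ), 0 ≤ S t ∧ 0 ≤ E t ∧ 0 ≤ I t)
    (hS0 : 0 < S 0) (hEI0 : 0 < E 0 + I 0)
    (hS : ∀ t ∈ Ici (0 : ℝ), HasDerivAt S (-β * S t * I t / N) t)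
    (hE : ∀ t ∈ Ici (0 : ℝ), HasDerivAt E (β * S t * I t / N - α * E t) t)
    (hI : ∀ t ∈ Ici (0 : ℝ),
      HasDerivAt I (α * E t - (lam₀ + γ₀ + δ₀) * I t) t) :
    ∃ Sinf : ℝ, Tendsto S atTop (𝓝 Sinf) ∧
      Sinf ≤ N / (β / (lam₀ + γ₀ + δ₀)) := by
  set c : ℝ := lam₀ + γ₀ + δ₀ with hc_def
  have hc : 0 < c := by positivity
  -- S is antitone on [0,∞)
  have hSanti : AntitoneOn S (Ici 0) := by
    apply aux_antitoneOn S (fun t => -β * S t * I t / N) hS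
    intro t ht
    obtain ⟨hSn, hEn, hIn⟩ := hnn t ht
    have h1 : -β * S t * I t ≤ 0 := by
      have := mul_nonneg (mul_nonneg hβ.le hSn) hIn
      linarith
    exact div_nonpos_of_nonpos_of_nonneg h1 hN.le
  -- the auxiliary function g
  set g : ℝ → ℝ := fun t => S (max t 0) with hg_def
  have hganti : Antitone g := by
    intro s t hst
    exact hSanti (le_max_right s 0) (le_max_right t 0) (max_le_max hst le_rfl)
  have hgbdd : BddBelow (Set.range g) := by
    refine ⟨0, ?_⟩
    rintro x ⟨t, rfl⟩
    exact (hnn _ (le_max_right t 0)).1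
  set Sinf : ℝ := ⨅ t, g t with hSinf_def
  have hgtend : Tendsto g atTop (𝓝 Sinf) := tendsto_atTop_ciInf hganti hgbdd
  have hStend : Tendsto S atTop (𝓝 Sinf) := by
    apply hgtend.congr'
    filter_upwards [eventually_ge_atTop (0:ℝ)] with t ht
    simp [hg_def, max_eq_left ht]
  refine ⟨Sinf, hStend, ?_⟩
  have hSinf_le : ∀ t ∈ Ici (0:ℝ), Sinf ≤ S t := by
    intro t ht
    have := ciInf_le hgbdd t
    simpa [hg_def, max_eq_left (mem_Ici.mp ht)] using this
  by_contra hcon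
  push_neg at hcon
  have hNc : N / (β / c) = N * c / β := by field_simp
  rw [hNc] at hcon
  set a : ℝ := β * Sinf / N with ha_def
  have hSinf_pos : 0 < Sinf := by
    have : 0 < N * c / β := by positivity
    linarith
  have hac : c < a := by
    rw [ha_def]
    rw [div_lt_iff₀ hβ] at hcon
    rw [lt_div_iff₀ hN]
    nlinarith
  have ha_pos : 0 < a := lt_trans hc hac
  set k : ℝ := (c + a) / (2 * a) with hk_def
  have hk_pos : 0 < k := by positivity
  have hk_lt1 : k < 1 := by
    rw [hk_def, div_lt_one (by positivity)]; linarith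
  have hka : k * a = (c + a) / 2 := by
    rw [hk_def]; field_simp
  set m : ℝ := min ((a - c) / 2) (α * (1 - k) / k) with hm_def
  have hm_pos : 0 < m := by
    apply lt_min (by linarith)
    exact div_pos (mul_pos hα (by linarith)) hk_pos
  -- the function W and its derivative
  set W : ℝ → ℝ := fun t => I t + k * E t with hW_def
  set W' : ℝ → ℝ := fun t =>
    (α * E t - c * I t) + k * (β * S t * I t / N - α * E t) with hW'_def
  have hWderiv : ∀ t ∈ Ici (0:ℝ), HasDerivAt W (W' t) t := by
    intro t ht
    exact (hI t ht).add ((hE t ht).const_mul k)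
  -- key differential inequality: m * W t ≤ W' t
  have hkey : ∀ t ∈ Ici (0:ℝ), m * W t ≤ W' t := by
    intro t ht
    obtain ⟨hSn, hEn, hIn⟩ := hnn t ht
    have hSge : Sinf ≤ S t := hSinf_le t ht
    have h1 : m ≤ (a - c) / 2 := min_le_left _ _
    have h2' : m * k ≤ α * (1 - k) :=
      (le_div_iff₀ hk_pos).mp (min_le_right _ _)
    have h3 : a ≤ β * S t / N := by
      rw [ha_def]; gcongr
    have h4 : (c + a) / 2 ≤ k * (β * S t / N) := by
      rw [← hka]
      exact mul_le_mul_of_nonneg_left h3 hk_pos.le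
    have hA : m ≤ k * (β * S t / N) - c := by linarith
    have hB1 := mul_le_mul_of_nonneg_right hA hIn
    have hB2 := mul_le_mul_of_nonneg_right h2' hEn
    show m * (I t + k * E t) ≤ α * E t - c * I t + k * (β * S t * I t / N - α * E t)
    have e1 : α * E t - c * I t + k * (β * S t * I t / N - α * E t)
        = (k * (β * S t / N) - c) * I t + α * (1 - k) * E t := by ring
    have e2 : m * (I t + k * E t) = m * I t + m * k * E t := by ring
    rw [e1, e2]
    exact add_le_add hB1 hB2
  -- Gronwall-type lower bound: W t ≥ W 0 * exp (m * t)
  set f : ℝ → ℝ := fun t => W t * Real.exp (-(m * t)) with hf_def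
  have hfderiv : ∀ t ∈ Ici (0:ℝ),
      HasDerivAt f ((W' t - m * W t) * Real.exp (-(m * t))) t := by
    intro t ht
    have hexp : HasDerivAt (fun t : ℝ => Real.exp (-(m * t)))
        (Real.exp (-(m * t)) * (-m)) t := by
      have h0 : HasDerivAt (fun t : ℝ => -(m * t)) (-m) t := by
        exact ((hasDerivAt_id t).const_mul m).neg.congr_deriv (by simp)
      exact (Real.hasDerivAt_exp (-(m * t))).comp t h0
    have := (hWderiv t ht).mul hexp
    rw [show (W' t - m * W t) * Real.exp (-(m * t)) = W' t * Real.exp (-(m * t)) + W t * (Real.exp (-(m * t)) * -m) by ring]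
    exact this
  have hfmono : MonotoneOn f (Ici 0) := by
    apply aux_monotoneOn f (fun t => (W' t - m * W t) * Real.exp (-(m * t))) hfderiv
    intro t ht
    have := hkey t ht
    have he : 0 < Real.exp (-(m * t)) := Real.exp_pos _
    nlinarith
  have hWlow : ∀ t ∈ Ici (0:ℝ), W 0 * Real.exp (m * t) ≤ W t := by
    intro t ht
    have := hfmono (self_mem_Ici) ht (mem_Ici.mp ht)
    simp only [hf_def, mul_zero, neg_zero, Real.exp_zero, mul_one] at this
    have h2 := mul_le_mul_of_nonneg_right this (Real.exp_pos (m * t)).le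
    rwa [mul_assoc, ← Real.exp_add, neg_add_cancel, Real.exp_zero, mul_one] at h2
  -- total population bound
  set T : ℝ → ℝ := fun t => S t + E t + I t with hT_def
  have hTanti : AntitoneOn T (Ici 0) := by
    refine aux_antitoneOn T (fun t => -c * I t) ?_ ?_
    · intro t ht
      have h := ((hS t ht).add (hE t ht)).add (hI t ht)
      have heq : -β * S t * I t / N + (β * S t * I t / N - α * E t)
          + (α * E t - c * I t) = -c * I t := by ring
      show HasDerivAt T (-c * I t) t
      exact heq ▸ h
    · intro t ht
      show -c * I t ≤ 0
      have h := (hnn t ht).2.2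
      have := mul_nonneg hc.le h
      linarith
  have hWub : ∀ t ∈ Ici (0:ℝ), W t ≤ T 0 := by
    intro t ht
    obtain ⟨hSn, hEn, hIn⟩ := hnn t ht
    have h1 : T t ≤ T 0 := hTanti self_mem_Ici ht (mem_Ici.mp ht)
    simp only [hW_def, hT_def] at h1 ⊢
    nlinarith
  have hW0 : 0 < W 0 := by
    obtain ⟨hSn, hEn, hIn⟩ := hnn 0 self_mem_Ici
    simp only [hW_def]
    nlinarith
  -- contradiction: W grows without bound
  have hgrow : Tendsto (fun t => W 0 * Real.exp (m * t)) atTop atTop := by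
    apply Tendsto.const_mul_atTop hW0
    exact Real.tendsto_exp_atTop.comp (tendsto_id.const_mul_atTop hm_pos)
  have hev : ∀ᶠ t in atTop, T 0 < W 0 * Real.exp (m * t) :=
    hgrow.eventually_gt_atTop (T 0)
  obtain ⟨t, hlt, htge⟩ := (hev.and (eventually_ge_atTop (0:ℝ))).exists
  exact absurd (le_trans (hWlow t htge) (hWub t htge)) (not_le.mpr hlt)
end

section
/- If the effective reproduction number satisfies β(t) S(t)/N ≤ (1-ε)(λ₀+γ₀+δ₀) for all t ≥ 0 with ε ∈ (0,1), then in the SEIR subsystem the quantity E(t) + I(t) decays exponentially: there exist constants C, r > 0 with E(t)+I(t) ≤ C e^{-rt}(E(0)+I(0)). -/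
open Set

/-- If the effective reproduction number stays below `1 - ε`, then `E + I`
decays exponentially. -/
theorem seir_exponential_decay
    (N α lam₀ γ₀ δ₀ ε : ℝ) (hN : 0 < N)
    (hα : 0 < α) (hlam₀ : 0 < lam₀) (hγ₀ : 0 < γ₀) (hδ₀ : 0 < δ₀)
    (hε : ε ∈ Ioo (0 : ℝ) 1)
    (β : ℝ → ℝ) (hβc : Continuous β) (hβ : ∀ t, 0 ≤ β t)
    (S E I : ℝ → ℝ)
    (hnn : ∀ t ∈ Ici (0 : ℝ), 0 ≤ S t ∧ 0 ≤ E t ∧ 0 ≤ I t)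
    (hS : ∀ t ∈ Ici (0 : ℝ), HasDerivAt S (-β t * S t * I t / N) t)
    (hE : ∀ t ∈ Ici (0 : ℝ), HasDerivAt E (β t * S t * I t / N - α * E t) t)
    (hI : ∀ t ∈ Ici (0 : ℝ),
      HasDerivAt I (α * E t - (lam₀ + γ₀ + δ₀) * I t) t)
    (hRe : ∀ t ∈ Ici (0 : ℝ), β t * S t ≤ (1 - ε) * (lam₀ + γ₀ + δ₀) * N) :
    ∃ C > (0 : ℝ), ∃ r > (0 : ℝ), ∀ t ∈ Ici (0 : ℝ),
      E t + I t ≤ C * Real.exp (-r * t) * (E 0 + I 0) := by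
  obtain ⟨hε0, hε1⟩ := hε
  set c : ℝ := lam₀ + γ₀ + δ₀ with hc
  have hcpos : 0 < c := by positivity
  set θ : ℝ := 1 - ε / 2 with hθdef
  have hθ0 : 0 < θ := by simp only [hθdef]; linarith
  have hθ1 : θ ≤ 1 := by simp only [hθdef]; linarith
  set r : ℝ := min (α * ε / 2) (ε * c / 2) with hrdef
  have hr0 : 0 < r := lt_min (by positivity) (by positivity)
  set W : ℝ → ℝ := fun t => (E t + θ * I t) * Real.exp (r * t) with hWdef
  -- derivative of W at each t ≥ 0
  have hWderiv : ∀ t ∈ Ici (0 : ℝ), HasDerivAt W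
      ((β t * S t * I t / N - α * E t + θ * (α * E t - c * I t)) * Real.exp (r * t)
        + (E t + θ * I t) * (Real.exp (r * t) * r)) t := by
    intro t ht
    have hV : HasDerivAt (fun t => E t + θ * I t)
        (β t * S t * I t / N - α * E t + θ * (α * E t - c * I t)) t :=
      (hE t ht).add ((hI t ht).const_mul θ)
    have hexp : HasDerivAt (fun t => Real.exp (r * t)) (Real.exp (r * t) * r) t := by
      simpa using (HasDerivAt.exp ((hasDerivAt_id t).const_mul r))
    exact hV.mul hexp
  have hWcont : ContinuousOn W (Ici 0) := fun t ht =>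
    ((hWderiv t ht).continuousAt).continuousWithinAt
  have hWanti : AntitoneOn W (Ici 0) := by
    apply antitoneOn_of_deriv_nonpos (convex_Ici 0) hWcont
    · intro t ht
      rw [interior_Ici] at ht
      exact ((hWderiv t (Ioi_subset_Ici_self ht)).differentiableAt).differentiableWithinAt
    · intro t ht
      rw [interior_Ici] at ht
      have ht' : t ∈ Ici (0:ℝ) := Ioi_subset_Ici_self ht
      rw [(hWderiv t ht').deriv]
      have hIpos := (hnn t ht').2.2
      have hEpos := (hnn t ht').2.1
      have hexp : (0:ℝ) < Real.exp (r * t) := Real.exp_pos _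
      have hβS : β t * S t * I t / N ≤ (1 - ε) * c * I t := by
        rw [div_le_iff₀ hN]
        have := mul_le_mul_of_nonneg_right (hRe t ht') hIpos
        nlinarith
      have hr1 : r ≤ α * ε / 2 := min_le_left _ _
      have hr2 : r ≤ ε * c / 2 := min_le_right _ _
      have key : (β t * S t * I t / N - α * E t + θ * (α * E t - c * I t))
          + (E t + θ * I t) * r ≤ 0 := by
        have h1 : (r - α * ε / 2) * E t ≤ 0 := mul_nonpos_of_nonpos_of_nonneg (by linarith) hEpos
        have h2 : (θ * r - ε * c / 2) * I t ≤ 0 := by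
          apply mul_nonpos_of_nonpos_of_nonneg _ hIpos
          nlinarith
        simp only [hθdef] at *
        nlinarith
      nlinarith
  refine ⟨1 / θ, by positivity, r, hr0, ?_⟩
  intro t ht
  have hWt : W t ≤ W 0 := hWanti (self_mem_Ici) ht ht
  have hexp : (0:ℝ) < Real.exp (r * t) := Real.exp_pos _
  have hEpos := (hnn t ht).2.1
  have hIpos := (hnn t ht).2.2
  have hE0 := (hnn 0 self_mem_Ici).2.1
  have hI0 := (hnn 0 self_mem_Ici).2.2
  have hW0 : W 0 = E 0 + θ * I 0 := by simp [hWdef]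
  have h1 : (E t + θ * I t) * Real.exp (r * t) ≤ E 0 + I 0 := by
    have : E 0 + θ * I 0 ≤ E 0 + I 0 := by nlinarith
    calc (E t + θ * I t) * Real.exp (r * t) = W t := rfl
      _ ≤ W 0 := hWt
      _ = E 0 + θ * I 0 := hW0
      _ ≤ E 0 + I 0 := this
  have h2 : θ * (E t + I t) ≤ E t + θ * I t := by nlinarith
  have goal' : (E t + I t) * (θ * Real.exp (r * t)) ≤ E 0 + I 0 := by nlinarith
  have h3 : E t + I t ≤ (E 0 + I 0) / (θ * Real.exp (r * t)) :=
    (le_div_iff₀ (by positivity)).mpr goal'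
  calc E t + I t ≤ (E 0 + I 0) / (θ * Real.exp (r * t)) := h3
    _ = 1 / θ * Real.exp (-r * t) * (E 0 + I 0) := by
        rw [neg_mul, Real.exp_neg]; field_simp
end

section
/- For the Hamiltonian maximization in the Pontryagin condition, the maximizer of β ↦ β·S·(I/N)·(P_E - P_S) - L(β) over β ∈ (0,∞), where L(β) = Nk(-log(β/b) + β/b - 1), is unique and given explicitly by β* = b / (1 - (b S I (P_E - P_S))/(N² k)) whenever S I (P_E - P_S) < N² k / b, and β* is strictly less than b exactly when P_E < P_S. -/
open Set

/-- The unique maximizer of the Hamiltonian in `β` is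
`β* = b / (1 - bSI(P_E - P_S)/(N²k))`, and `β* < b` iff `P_E < P_S`. -/
theorem hamiltonian_maximizer
    (N k b S I PS PE : ℝ) (hN : 0 < N) (hk : 0 < k) (hb : 0 < b)
    (hS : 0 < S) (hI : 0 < I)
    (hcond : S * I * (PE - PS) < N ^ 2 * k / b)
    (g : ℝ → ℝ)
    (hg : ∀ β, g β = β * S * (I / N) * (PE - PS)
      - N * k * (-Real.log (β / b) + β / b - 1))
    (βstar : ℝ)
    (hβstar : βstar = b / (1 - b * S * I * (PE - PS) / (N ^ 2 * k))) :
    0 < βstar ∧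
    (∀ β ∈ Ioi (0 : ℝ), β ≠ βstar → g β < g βstar) ∧
    (βstar < b ↔ PE < PS) := by
  have hNk : (0:ℝ) < N ^ 2 * k := by positivity
  have hX1 : b * S * I * (PE - PS) / (N ^ 2 * k) < 1 := by
    rw [div_lt_one hNk]
    have := (lt_div_iff₀ hb).mp hcond
    nlinarith
  have hDpos : 0 < 1 - b * S * I * (PE - PS) / (N ^ 2 * k) := by linarith
  have hβpos : 0 < βstar := by rw [hβstar]; positivity
  have hpos2 : 0 < N ^ 2 * k - b * S * I * (PE - PS) := by
    have := (lt_div_iff₀ hb).mp hcond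
    nlinarith
  have hβs : βstar * (1 - b * S * I * (PE - PS) / (N ^ 2 * k)) = b := by
    rw [hβstar]; field_simp [hpos2.ne']
  have h1 : (1 - (1 - b * S * I * (PE - PS) / (N ^ 2 * k))) * (N ^ 2 * k)
      = b * S * I * (PE - PS) := by field_simp; ring
  -- the first-order condition: c·b·β* = Nk(β* - b) with c = S(I/N)(PE-PS)
  have hc : S * I * (PE - PS) * b * βstar = N ^ 2 * k * (βstar - b) := by
    have h2 : βstar * (b * S * I * (PE - PS)) = (βstar - b) * (N ^ 2 * k) := by
      linear_combination -βstar * h1 - (N ^ 2 * k) * hβs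
    linear_combination h2
  refine ⟨hβpos, ?_, ?_⟩
  · intro β hβ hne
    have hβ0 : 0 < β := hβ
    have hx : 0 < β / βstar := div_pos hβ0 hβpos
    have hx1 : β / βstar ≠ 1 := by
      intro h
      exact hne (by field_simp at h; exact h)
    have hlog := Real.log_lt_sub_one_of_pos hx hx1
    have key : g β - g βstar = N * k * (Real.log (β / βstar) - (β / βstar - 1)) := by
      rw [hg, hg, Real.log_div hβ0.ne' hb.ne', Real.log_div hβpos.ne' hb.ne',
        Real.log_div hβ0.ne' hβpos.ne']
      field_simp
      ring_nf
      linear_combination (β - βstar) * hc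
    nlinarith [mul_pos (mul_pos hN hk) (sub_pos.mpr hlog)]
  · rw [hβstar, div_lt_iff₀ hDpos]
    constructor
    · intro h
      have hx : b * S * I * (PE - PS) / (N ^ 2 * k) < 0 := by nlinarith
      have hnum : b * S * I * (PE - PS) < 0 := by
        by_contra h6
        push_neg at h6
        have := div_nonneg h6 hNk.le
        linarith
      nlinarith [mul_pos (mul_pos hb hS) hI]
    · intro h
      have hnum : b * S * I * (PE - PS) < 0 :=
        mul_neg_of_pos_of_neg (by positivity) (by linarith)
      have hx : b * S * I * (PE - PS) / (N ^ 2 * k) < 0 := div_neg_of_neg_of_pos hnum hNk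
      nlinarith
end
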